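/- Let S be an action-based randomization mechanism, U an uncertainty measure and p a prior on X. For each finite strategy σ of length l, there exists a non-adaptive finite strategy σ' of length |range(σ)| × l (e.g. the strategy playing each of the actions occurring in σ for l times each, in any fixed order) such that I_{σ'}(S,p) ≥ I_σ(S,p). -/

import Mathlib

open scoped BigOperators Classical

noncomputable section

variable {X Y A : Type*}

/-- Conditional product of transition probabilities along `ys`, where the action at each
step is chosen by the strategy `σ` applied to the accumulated prefix `pre`
(`0` if the strategy is undefined on some prefix). -/
def likAux (M : A → X → Y → ℝ) (σ : List Y → Option A) (x : X) : List Y → List Y → ℝ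
  | _, [] => 1
  | pre, y :: ys => ((σ pre).elim 0 fun a => M a x y) * likAux M σ x (pre ++ [y]) ys

/-- `p_σ(ys | x)`: the probability of the (maximal) observation sequence `ys`
given the secret `x`, under the finite strategy `σ`. A sequence is maximal when its
last proper prefix is in the domain of `σ` but the sequence itself is not. -/
def condDist (M : A → X → Y → ℝ) (σ : List Y → Option A) (x : X) (ys : List Y) : ℝ :=
  if ys ≠ [] ∧ (σ ys.dropLast).isSome ∧ σ ys = none then likAux M σ x [] ys else 0

/-- joint distribution `p_σ(x, ys)` induced by the prior `p` and the strategy `σ`. -/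
def joint (M : A → X → Y → ℝ) (σ : List Y → Option A) (p : X → ℝ) (x : X) (ys : List Y) : ℝ :=
  p x * condDist M σ x ys

/-- marginal `p_σ(ys)` on observation sequences. -/
def obsProb [Fintype X] (M : A → X → Y → ℝ) (σ : List Y → Option A) (p : X → ℝ)
    (ys : List Y) : ℝ :=
  ∑ x : X, joint M σ p x ys

/-- posterior `p_σ(·|ys)` on secrets. -/
def post [Fintype X] (M : A → X → Y → ℝ) (σ : List Y → Option A) (p : X → ℝ)
    (ys : List Y) : X → ℝ :=
  fun x => joint M σ p x ys / obsProb M σ p ys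

/-- conditional uncertainty `U_σ(X|Y) = Σ_{ys : p_σ(ys)>0} p_σ(ys)·U(p_σ(·|ys))`
(terms with `p_σ(ys) = 0` contribute `0`). -/
def condUncert [Fintype X] (U : (X → ℝ) → ℝ) (M : A → X → Y → ℝ) (σ : List Y → Option A)
    (p : X → ℝ) : ℝ :=
  ∑' ys : List Y, obsProb M σ p ys * U (post M σ p ys)

/-- information leakage `I_σ(S,p) = U(p) − U_σ(X|Y)`. -/
def leak [Fintype X] (U : (X → ℝ) → ℝ) (M : A → X → Y → ℝ) (σ : List Y → Option A)
    (p : X → ℝ) : ℝ :=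
  U p - condUncert U M σ p

/-- the domain of a strategy is prefix-closed. -/
def PrefixClosed (σ : List Y → Option A) : Prop :=
  ∀ l l' : List Y, l <+: l' → (σ l').isSome → (σ l).isSome

/-- a finite strategy: nonempty prefix-closed finite domain. -/
def FiniteStrategy (σ : List Y → Option A) : Prop :=
  (σ []).isSome ∧ PrefixClosed σ ∧ {l : List Y | (σ l).isSome}.Finite

/-- the strategy has length exactly `n` (one plus the maximal length of a sequence
in its domain). -/
def HasLength (σ : List Y → Option A) (n : ℕ) : Prop :=
  (∀ ys, (σ ys).isSome → ys.length + 1 ≤ n) ∧ ∃ ys, (σ ys).isSome ∧ ys.length + 1 = n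

/-- the set of actions occurring in a strategy. -/
def rangeActs (σ : List Y → Option A) : Set A :=
  {a | ∃ ys, σ ys = some a}

/-- the non-adaptive (complete) strategy playing the listed actions in order:
the action played only depends on the number of past observations. -/
def ofList (as : List A) : List Y → Option A := fun ys => as[ys.length]?

/-- an action-based randomization mechanism: each row of each matrix `M_a` is a
probability distribution on observations. -/
def IsMechanism [Fintype Y] (M : A → X → Y → ℝ) : Prop :=
  ∀ a x, M a x ∈ stdSimplex ℝ Y

/-- an uncertainty measure: concave and continuous on the probability simplex. -/
def IsUncertainty [Fintype X] (U : (X → ℝ) → ℝ) : Prop :=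
  ConcaveOn ℝ (stdSimplex ℝ X) U ∧ ContinuousOn U (stdSimplex ℝ X)



/-- count of uses of action `a` by `σ` in the first `i` steps along `z`. -/
def cnt (σ : List Y → Option A) (z : List Y) (i : ℕ) (a : A) : ℕ :=
  ((List.range i).filter (fun j => σ (z.take j) = some a)).length

/-- position read at step `i` along trace `z`. -/
def pos (σ : List Y → Option A) (idx : A → ℕ) (l : ℕ) (z : List Y) (i : ℕ) : ℕ :=
  (σ (z.take i)).elim 0 (fun a => idx a * l + cnt σ z i a)

/-- the simulation of `σ` reading observations from `w` at block positions. -/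
def simF (σ : List Y → Option A) (idx : A → ℕ) (l : ℕ) (w : List Y) (d : Y) :
    ℕ → List Y → List Y
  | 0, pre => pre
  | (fuel+1), pre =>
    match σ pre with
    | none => pre
    | some a => simF σ idx l w d fuel (pre ++ [w.getD (idx a * l + cnt σ pre pre.length a) d])

lemma cnt_congr {σ : List Y → Option A} {pre z : List Y} (h : pre <+: z) {i : ℕ}
    (hi : i ≤ pre.length) : cnt σ z i = cnt σ pre i := by
  unfold cnt
  funext a
  congr 1
  apply List.filter_congr
  intro j hj
  simp only [List.mem_range] at hj
  have h1 : pre = z.take pre.length := List.prefix_iff_eq_take.mp h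
  have : z.take j = pre.take j := by
    rw [h1, List.take_take, min_eq_left (le_of_lt (lt_of_lt_of_le hj hi))]
  rw [this]

lemma cnt_succ (σ : List Y → Option A) (z : List Y) (i : ℕ) (a : A) :
    cnt σ z (i+1) a = cnt σ z i a + (if σ (z.take i) = some a then 1 else 0) := by
  unfold cnt
  rw [List.range_succ, List.filter_append]
  simp
  split <;> simp_all

lemma cnt_le (σ : List Y → Option A) (z : List Y) (i : ℕ) (a : A) : cnt σ z i a ≤ i := by
  unfold cnt
  calc _ ≤ (List.range i).length := List.length_filter_le _ _
  _ = i := List.length_range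

lemma cnt_mono (σ : List Y → Option A) (z : List Y) {i i' : ℕ} (h : i ≤ i') (a : A) :
    cnt σ z i a ≤ cnt σ z i' a := by
  induction i' with
  | zero => simp_all
  | succ n ih =>
    rcases Nat.lt_or_ge i (n+1) with h'|h'
    · have := ih (by omega)
      rw [cnt_succ]; omega
    · have : i = n + 1 := by omega
      subst this; rfl

lemma cnt_strict {σ : List Y → Option A} {z : List Y} {i i' : ℕ} (h : i < i') {a : A}
    (ha : σ (z.take i) = some a) : cnt σ z i a < cnt σ z i' a := by
  have h1 : cnt σ z (i+1) a = cnt σ z i a + 1 := by rw [cnt_succ, if_pos ha]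
  have := cnt_mono σ z (show i + 1 ≤ i' by omega) a
  omega

/-- Lemma A: if the constraints hold along a maximal `z`, the simulation produces `z`. -/
lemma simF_run {σ : List Y → Option A} {idx : A → ℕ} {l : ℕ} {w : List Y} {d : Y}
    {z : List Y} (h1 : ∀ i < z.length, (σ (z.take i)).isSome) (h2 : σ z = none)
    (hw : ∀ i < z.length, w.getD (pos σ idx l z i) d = z.getD i d) :
    ∀ fuel (pre : List Y), pre <+: z → z.length ≤ pre.length + fuel →
      simF σ idx l w d fuel pre = z := by
  intro fuel
  induction fuel with
  | zero =>
    intro pre hpre hlen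
    have : pre = z := hpre.eq_of_length_le (by omega)
    simpa [simF] using this
  | succ n ih =>
    intro pre hpre hlen
    by_cases hz : pre = z
    · subst hz; simp [simF, h2]
    · have hlt : pre.length < z.length :=
        lt_of_le_of_ne hpre.length_le (fun h => hz (hpre.eq_of_length_le (le_of_eq h.symm)))
      have hptake : pre = z.take pre.length := List.prefix_iff_eq_take.mp hpre
      have hsome := h1 pre.length hlt
      obtain ⟨a, ha⟩ := Option.isSome_iff_exists.mp hsome
      rw [← hptake] at ha
      have hcnt : cnt σ z pre.length = cnt σ pre pre.length := cnt_congr hpre le_rfl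
      have hwv : w.getD (idx a * l + cnt σ pre pre.length a) d = z.getD pre.length d := by
        have := hw pre.length hlt
        rw [pos, ← hptake, ha] at this
        simpa [hcnt] using this
      have hnext : pre ++ [z.getD pre.length d] <+: z := by
        have h3 : z.take (pre.length + 1) = z.take pre.length ++ [z.getD pre.length d] := by
          rw [List.take_succ]
          congr 1
          rw [List.getD_eq_getElem?_getD, List.getElem?_eq_getElem hlt]
          simp
        have h4 : pre ++ [z.getD pre.length d] = z.take (pre.length + 1) := by
          rw [h3, ← hptake]
        rw [h4]
        exact List.take_prefix _ _
      have := ih (pre ++ [z.getD pre.length d]) hnext (by simp; omega)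
      simp only [simF, ha, hwv]
      exact this

/-- Lemma B: properties of the simulation result. -/
lemma simF_spec {σ : List Y → Option A} {idx : A → ℕ} {l : ℕ} {w : List Y} {d : Y}
    (hσl : ∀ ys : List Y, (σ ys).isSome → ys.length + 1 ≤ l) :
    ∀ fuel (pre : List Y), (∀ i < pre.length, (σ (pre.take i)).isSome) →
      l ≤ pre.length + fuel →
      pre <+: simF σ idx l w d fuel pre ∧ σ (simF σ idx l w d fuel pre) = none ∧
      (∀ i < (simF σ idx l w d fuel pre).length,
        (σ ((simF σ idx l w d fuel pre).take i)).isSome) ∧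
      (∀ i, pre.length ≤ i → i < (simF σ idx l w d fuel pre).length →
        w.getD (pos σ idx l (simF σ idx l w d fuel pre) i) d
          = (simF σ idx l w d fuel pre).getD i d) := by
  intro fuel
  induction fuel with
  | zero =>
    intro pre hpre hlen
    have hnone : σ pre = none := by
      cases hs : σ pre with
      | none => rfl
      | some a => exact absurd (hσl pre (by simp [hs])) (by omega)
    refine ⟨List.prefix_refl _, by simpa [simF] using hnone, by simpa [simF] using hpre, ?_⟩
    simp only [simF]
    omega
  | succ n ih =>
    intro pre hpre hlen
    cases hs : σ pre with
    | none =>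
      refine ⟨by simp [simF, hs], by simp [simF, hs], by simpa [simF, hs] using hpre, ?_⟩
      simp only [simF, hs]
      omega
    | some a =>
      set y : Y := w.getD (idx a * l + cnt σ pre pre.length a) d with hy
      have hsimp : simF σ idx l w d (n+1) pre = simF σ idx l w d n (pre ++ [y]) := by
        simp only [simF, hs]
        rfl
      have hpre' : ∀ i < (pre ++ [y]).length, (σ ((pre ++ [y]).take i)).isSome := by
        intro i hi
        simp only [List.length_append, List.length_singleton] at hi
        rcases Nat.lt_or_ge i pre.length with h'|h'
        · rw [List.take_append_of_le_length (le_of_lt h')]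
          exact hpre i h'
        · have : i = pre.length := by omega
          subst this
          rw [List.take_append_of_le_length le_rfl]
          simp [hs]
      have hlen' : l ≤ (pre ++ [y]).length + n := by simp; omega
      obtain ⟨B1, B2, B3, B4⟩ := ih (pre ++ [y]) hpre' hlen'
      rw [hsimp]
      set z := simF σ idx l w d n (pre ++ [y]) with hz
      have hprez : pre <+: z := ((pre.prefix_append [y]).trans B1)
      refine ⟨hprez, B2, B3, ?_⟩
      intro i hile hilt
      rcases Nat.lt_or_ge i (pre ++ [y]).length with h'|h'
      · have : i = pre.length := by simp at h'; omega
        subst this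
        have hztake : z.take pre.length = pre := (List.prefix_iff_eq_take.mp hprez).symm
        have hcnt : cnt σ z pre.length = cnt σ pre pre.length := cnt_congr hprez le_rfl
        have : pos σ idx l z pre.length = idx a * l + cnt σ pre pre.length a := by
          rw [pos, hztake, hs]; simp [hcnt]
        rw [this, ← hy]
        have h1 : (pre ++ [y]) = z.take (pre.length + 1) := by
          simpa using List.prefix_iff_eq_take.mp B1
        have hzy : z.getD pre.length d = y := by
          rw [List.getD_eq_getElem?_getD]
          have h5 : z[pre.length]? = (pre ++ [y])[pre.length]? := by
            rw [h1, List.getElem?_take_of_lt (by omega)]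
          rw [h5, List.getElem?_concat_length]
          rfl
        rw [hzy]
      · exact B4 i h' hilt


lemma sum_constrained {Y : Type*} [Fintype Y] {N k : ℕ} (g : Fin N → Y → ℝ)
    (hg : ∀ j, ∑ y : Y, g j y = 1) (ι : Fin k → Fin N) (hι : Function.Injective ι)
    (vv : Fin k → Y) :
    (∑ f : Fin N → Y, if (∀ i, f (ι i) = vv i) then ∏ j, g j (f j) else 0)
      = ∏ i, g (ι i) (vv i) := by
  have key : ∀ f : Fin N → Y,
      (if (∀ i, f (ι i) = vv i) then ∏ j, g j (f j) else 0)
        = ∏ j, (if ∀ i, ι i = j → f j = vv i then g j (f j) else 0) := by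
    intro f
    by_cases hf : ∀ i, f (ι i) = vv i
    · rw [if_pos hf]
      refine Finset.prod_congr rfl fun j _ => ?_
      rw [if_pos]
      intro i hi
      rw [← hi]
      exact hf i
    · rw [if_neg hf]
      push_neg at hf
      obtain ⟨i₀, hi₀⟩ := hf
      refine (Finset.prod_eq_zero (Finset.mem_univ (ι i₀)) ?_).symm
      rw [if_neg]
      push_neg
      exact ⟨i₀, rfl, hi₀⟩
  simp only [key]
  have swap : (∑ f : Fin N → Y, ∏ j, (if ∀ i, ι i = j → f j = vv i then g j (f j) else 0))
      = ∏ j, ∑ y : Y, (if ∀ i, ι i = j → y = vv i then g j y else 0) := by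
    rw [Finset.prod_univ_sum]
    rw [← Fintype.piFinset_univ]
  rw [swap]
  have hout : ∀ j ∈ Finset.univ, j ∉ Finset.image ι Finset.univ →
      (∑ y : Y, (if ∀ i, ι i = j → y = vv i then g j y else 0)) = 1 := by
    intro j _ hj
    have hy : ∀ y : Y, (if ∀ i, ι i = j → y = vv i then g j y else 0) = g j y := by
      intro y
      rw [if_pos]
      intro i hi
      exact absurd (hi ▸ Finset.mem_image_of_mem ι (Finset.mem_univ i)) hj
    simp only [hy]
    exact hg j
  rw [← Finset.prod_subset (Finset.subset_univ (Finset.image ι Finset.univ)) hout]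
  rw [Finset.prod_image (fun a _ b _ h => hι h)]
  refine Finset.prod_congr rfl fun i₀ _ => ?_
  have hy : ∀ y : Y, (if ∀ i, ι i = ι i₀ → y = vv i then g (ι i₀) y else 0)
      = (if y = vv i₀ then g (ι i₀) y else 0) := by
    intro y
    by_cases hyv : y = vv i₀
    · rw [if_pos hyv, if_pos]
      intro i hi
      rw [hι hi]
      exact hyv
    · rw [if_neg hyv, if_neg]
      push_neg
      exact ⟨i₀, rfl, hyv⟩
  simp only [hy]
  simp

lemma likAux_eq_prod (M : A → X → Y → ℝ) (σ : List Y → Option A) (x : X) (d : Y) :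
    ∀ (zs pre : List Y), likAux M σ x pre zs =
      ∏ i ∈ Finset.range zs.length,
        ((σ (pre ++ zs.take i)).elim 0 fun a => M a x (zs.getD i d)) := by
  intro zs
  induction zs with
  | nil => intro pre; simp [likAux]
  | cons y ys ih =>
    intro pre
    rw [likAux]
    rw [show (y :: ys).length = ys.length + 1 from rfl, Finset.prod_range_succ']
    have h0 : (σ (pre ++ (y :: ys).take 0)).elim 0 (fun a => M a x ((y :: ys).getD 0 d))
        = (σ pre).elim 0 fun a => M a x y := by simp
    have hs : ∀ i, (σ (pre ++ (y :: ys).take (i+1))).elim 0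
          (fun a => M a x ((y :: ys).getD (i+1) d))
        = (σ ((pre ++ [y]) ++ ys.take i)).elim 0 fun a => M a x (ys.getD i d) := by
      intro i
      simp [List.take_succ_cons, List.append_assoc]
    simp only [hs, h0]
    rw [ih (pre ++ [y])]
    ring

lemma likAux_nonneg {M : A → X → Y → ℝ} (hM : ∀ a x y, 0 ≤ M a x y) (x : X) :
    ∀ (zs pre : List Y), 0 ≤ likAux M σ x pre zs := by
  intro zs
  induction zs with
  | nil => intro pre; simp [likAux]
  | cons y ys ih =>
    intro pre
    rw [likAux]
    refine mul_nonneg ?_ (ih (pre ++ [y]))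
    cases σ pre with
    | none => simp
    | some a => simpa using hM a x y

lemma condDist_nonneg {M : A → X → Y → ℝ} (hM : ∀ a x y, 0 ≤ M a x y)
    (σ : List Y → Option A) (x : X) (ys : List Y) : 0 ≤ condDist M σ x ys := by
  unfold condDist
  split
  · exact likAux_nonneg hM x ys []
  · exact le_refl 0

lemma ofFn_getD {N : ℕ} (f : Fin N → Y) (p : ℕ) (hp : p < N) (d : Y) :
    (List.ofFn f).getD p d = f ⟨p, hp⟩ := by
  rw [List.getD_eq_getElem?_getD, List.getElem?_eq_getElem (by simpa using hp)]
  simp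

lemma isSome_ofList (as : List A) (ys : List Y) :
    ((ofList as : List Y → Option A) ys).isSome ↔ ys.length < as.length := by
  rw [ofList]
  constructor
  · intro h
    by_contra hlen
    rw [List.getElem?_eq_none (by omega)] at h
    simp at h
  · intro h
    rw [List.getElem?_eq_getElem h]
    simp

lemma condDist_ofList [Fintype Y] (M : A → X → Y → ℝ) (as : List A) (a₀ : A) (d : Y) (x : X)
    (hN : 1 ≤ as.length) (w : List Y) :
    condDist M (ofList as) x w =
      if w.length = as.length then
        ∏ i ∈ Finset.range as.length, M (as.getD i a₀) x (w.getD i d)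
      else 0 := by
  unfold condDist
  by_cases hw : w.length = as.length
  · have hwne : w ≠ [] := by
      intro h
      rw [h] at hw
      simp at hw
      omega
    rw [if_pos ⟨hwne, by
        rw [isSome_ofList]
        have := @List.length_dropLast _ w
        have : w.length ≠ 0 := by simpa using hwne
        omega,
      by simp [ofList, hw]⟩]
    rw [if_pos hw]
    rw [likAux_eq_prod M (ofList as) x d w []]
    rw [hw]
    refine Finset.prod_congr rfl fun i hi => ?_
    simp only [Finset.mem_range] at hi
    have htake : ([] ++ w.take i).length = i := by
      simp [List.length_take]
      omega
    have : (ofList as : List Y → Option A) ([] ++ w.take i) = some (as.getD i a₀) := by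
      rw [ofList, htake, List.getElem?_eq_getElem (by omega)]
      congr 1
      rw [List.getD_eq_getElem?_getD, List.getElem?_eq_getElem (by omega)]
      simp
    rw [this]
    rfl
  · rw [if_neg hw, if_neg]
    rintro ⟨h1, h2, h3⟩
    rw [isSome_ofList] at h2
    have h3' : ¬ (w.length < as.length) := by
      simp [ofList] at h3
      omega
    have := @List.length_dropLast _ w
    have : w.length ≠ 0 := by simpa using h1
    omega

lemma pushforward [Fintype X] [Fintype Y]
    (M : A → X → Y → ℝ) (hM : IsMechanism M)
    (σ : List Y → Option A) (hpc : PrefixClosed σ)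
    (idx : A → ℕ) (l N : ℕ) (hl1 : 1 ≤ l) (hlN : l ≤ N) (d : Y) (a₀ : A)
    (hσl : ∀ ys : List Y, (σ ys).isSome → ys.length + 1 ≤ l)
    (as : List A) (hasN : as.length = N)
    (hpos : ∀ (pre : List Y) (a : A), σ pre = some a → ∀ c < l,
      idx a * l + c < N ∧ as.getD (idx a * l + c) a₀ = a)
    (hinj : ∀ (pre pre' : List Y) (a b : A), σ pre = some a → σ pre' = some b → a ≠ b →
      idx a ≠ idx b)
    {z : List Y} (hz1 : z ≠ []) (hz2 : (σ z.dropLast).isSome) (hz3 : σ z = none) (x : X) :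
    (∑ f : Fin N → Y, if simF σ idx l (List.ofFn f) d N [] = z
        then ∏ j : Fin N, M (as.getD (j : ℕ) a₀) x (f j) else 0)
      = condDist M σ x z := by
  have hzpos : 0 < z.length := List.length_pos_iff.mpr hz1
  have h1 : ∀ i < z.length, (σ (z.take i)).isSome := by
    intro i hi
    refine hpc _ _ ?_ hz2
    rw [List.dropLast_eq_take]
    have : z.take i = (z.take (z.length - 1)).take i := by
      rw [List.take_take, min_eq_left (by omega)]
    rw [this]
    exact List.take_prefix _ _
  have hzlen : z.length ≤ l := by
    have := hσl _ hz2
    rw [List.length_dropLast] at this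
    omega
  have hact : ∀ i, i < z.length → σ (z.take i) = some ((σ (z.take i)).getD a₀) := by
    intro i hi
    rcases Option.isSome_iff_exists.mp (h1 i hi) with ⟨a, ha⟩
    rw [ha]
    rfl
  have hcntlt : ∀ i < z.length, ∀ a : A, cnt σ z i a < l :=
    fun i hi a => lt_of_le_of_lt (cnt_le σ z i a) (by omega)
  have hplt : ∀ i, (hi : i < z.length) → pos σ idx l z i < N := by
    intro i hi
    rw [pos, hact i hi]
    exact (hpos _ _ (hact i hi) _ (hcntlt i hi _)).1
  set ι : Fin z.length → Fin N := fun i => ⟨pos σ idx l z i, hplt i i.2⟩ with hι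
  have hdiv : ∀ i, (hi : i < z.length) →
      pos σ idx l z i / l = idx ((σ (z.take i)).getD a₀) := by
    intro i hi
    rw [pos, hact i hi]
    simp only [Option.elim, Option.getD_some]
    rw [mul_comm, Nat.mul_add_div (by omega), Nat.div_eq_of_lt (hcntlt i hi _)]
    omega
  have hposne : ∀ i i' : ℕ, i < i' → (hi' : i' < z.length) →
      pos σ idx l z i ≠ pos σ idx l z i' := by
    intro i i' hii hi'
    have hi : i < z.length := by omega
    by_cases hab : (σ (z.take i)).getD a₀ = (σ (z.take i')).getD a₀
    · have hlt : cnt σ z i ((σ (z.take i)).getD a₀) < cnt σ z i' ((σ (z.take i)).getD a₀) :=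
        cnt_strict hii (hact i hi)
      rw [pos, pos, hact i hi, hact i' hi']
      simp only [Option.elim, Option.getD_some]
      rw [← hab]
      intro hcontra
      have := Nat.add_left_cancel hcontra
      omega
    · intro hcontra
      have := hinj _ _ _ _ (hact i hi) (hact i' hi') hab
      have h2 := hdiv i hi
      have h3 := hdiv i' hi'
      rw [hcontra] at h2
      rw [h2] at h3
      exact this h3
  have hιinj : Function.Injective ι := by
    intro i i' h
    by_contra hne
    have : (i : ℕ) ≠ (i' : ℕ) := fun hc => hne (Fin.ext hc)
    have hval : pos σ idx l z i = pos σ idx l z i' := congrArg Fin.val h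
    rcases Nat.lt_or_ge (i : ℕ) (i' : ℕ) with h'|h'
    · exact hposne i i' h' i'.2 hval
    · exact hposne i' i (by omega) i.2 hval.symm
  have heq : ∀ f : Fin N → Y, (simF σ idx l (List.ofFn f) d N [] = z)
      ↔ (∀ i : Fin z.length, f (ι i) = z.getD i d) := by
    intro f
    constructor
    · intro hsim
      obtain ⟨_, _, _, B4⟩ := simF_spec hσl N ([] : List Y) (by simp) (by simp; omega)
      rw [hsim] at B4
      intro i
      have := B4 i (by simp) i.2
      rw [ofFn_getD f _ (hplt i i.2) d] at this
      exact this
    · intro hf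
      refine simF_run h1 hz3 ?_ N [] List.nil_prefix (by simp; omega)
      intro i hi
      rw [ofFn_getD f _ (hplt i hi) d]
      exact hf ⟨i, hi⟩
  have hrw : (∑ f : Fin N → Y, if simF σ idx l (List.ofFn f) d N [] = z
        then ∏ j : Fin N, M (as.getD (j : ℕ) a₀) x (f j) else 0)
      = ∑ f : Fin N → Y, if (∀ i : Fin z.length, f (ι i) = z.getD i d)
        then ∏ j : Fin N, M (as.getD (j : ℕ) a₀) x (f j) else 0 := by
    refine Finset.sum_congr rfl fun f _ => ?_
    exact if_congr (heq f) rfl rfl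
  rw [hrw, sum_constrained (fun j => M (as.getD (j : ℕ) a₀) x)
    (fun j => (hM (as.getD (j : ℕ) a₀) x).2) ι hιinj (fun i => z.getD i d)]
  rw [condDist, if_pos ⟨hz1, hz2, hz3⟩, likAux_eq_prod M σ x d z []]
  rw [← Fin.prod_univ_eq_prod_range
    (fun i => (σ ([] ++ z.take i)).elim 0 fun a => M a x (z.getD i d)) z.length]
  refine Finset.prod_congr rfl fun i _ => ?_
  have hasd : as.getD ((ι i : Fin N) : ℕ) a₀ = (σ (z.take (i : ℕ))).getD a₀ := by
    have h9 := (hpos _ _ (hact i i.2) (cnt σ z i ((σ (z.take (i : ℕ))).getD a₀))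
      (hcntlt i i.2 _)).2
    show as.getD (pos σ idx l z (i : ℕ)) a₀ = _
    rw [pos, hact i i.2]
    simp only [Option.elim, Option.getD_some]
    exact h9
  rw [hasd, List.nil_append, hact i i.2]
  rfl

/-- Theorem 4.6: for each finite strategy `σ` of length `l` there is a
non-adaptive finite strategy `σ'` (given by a list of actions, hence playing actions
depending only on the number of past observations) of length `|range(σ)| × l` such that
`I_{σ'}(S,p) ≥ I_σ(S,p)`. -/
theorem nonadaptive_simulates_adaptive
    [Fintype X] [Fintype Y] [Fintype A] [Nonempty X] [Nonempty Y] [Nonempty A]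
    (M : A → X → Y → ℝ) (hM : IsMechanism M)
    (U : (X → ℝ) → ℝ) (hU : IsUncertainty U)
    (p : X → ℝ) (hp : p ∈ stdSimplex ℝ X)
    (σ : List Y → Option A) (hσ : FiniteStrategy σ)
    (l : ℕ) (hl : HasLength σ l) :
    ∃ as : List A,
      as.length = (rangeActs σ).ncard * l ∧
      FiniteStrategy (ofList as : List Y → Option A) ∧
      HasLength (ofList as : List Y → Option A) ((rangeActs σ).ncard * l) ∧
      leak U M σ p ≤ leak U M (ofList as : List Y → Option A) p := by
  classical
  obtain ⟨hnil, hpc, hfin⟩ := hσ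
  obtain ⟨a₀, ha₀⟩ := Option.isSome_iff_exists.mp hnil
  have d : Y := Classical.arbitrary Y
  -- the finset of actions
  set domF : Finset (List Y) := hfin.toFinset with hdomF
  set R : Finset A := domF.image (fun pre => (σ pre).getD a₀) with hRdef
  have hR : ∀ a : A, a ∈ R ↔ ∃ pre, σ pre = some a := by
    intro a
    rw [hRdef]
    simp only [Finset.mem_image, hdomF, Set.Finite.mem_toFinset, Set.mem_setOf_eq]
    constructor
    · rintro ⟨pre, hpre, hget⟩
      obtain ⟨b, hb⟩ := Option.isSome_iff_exists.mp hpre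
      exact ⟨pre, by rw [hb]; rw [hb] at hget; simpa using hget.symm ▸ rfl⟩
    · rintro ⟨pre, hpre⟩
      exact ⟨pre, by simp [hpre], by simp [hpre]⟩
  have hrange : rangeActs σ = ↑R := by
    ext a
    rw [rangeActs, Set.mem_setOf_eq, Finset.mem_coe, hR]
  have hRcard : (rangeActs σ).ncard = R.card := by
    rw [hrange, Set.ncard_coe_finset]
  have ha₀R : a₀ ∈ R := (hR a₀).mpr ⟨[], ha₀⟩
  have hRpos : 1 ≤ R.card := Finset.card_pos.mpr ⟨a₀, ha₀R⟩
  have hl1 : 1 ≤ l := by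
    obtain ⟨ys, hys, hlen⟩ := hl.2
    omega
  set rl : List A := R.toList with hrl
  have hrllen : rl.length = R.card := Finset.length_toList R
  set idx : A → ℕ := fun a => rl.idxOf a with hidx
  set N : ℕ := R.card * l with hN
  have hN1 : 1 ≤ N := Nat.one_le_iff_ne_zero.mpr (by positivity)
  have hlN : l ≤ N := le_mul_of_one_le_left (by omega) hRpos
  set as : List A := List.ofFn (fun j : Fin N => rl.getD ((j : ℕ) / l) a₀) with has
  have haslen : as.length = N := by rw [has, List.length_ofFn]
  have hpos : ∀ (pre : List Y) (a : A), σ pre = some a → ∀ c < l,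
      idx a * l + c < N ∧ as.getD (idx a * l + c) a₀ = a := by
    intro pre a hpre c hc
    have haR : a ∈ R := (hR a).mpr ⟨pre, hpre⟩
    have harl : a ∈ rl := by rw [hrl]; exact Finset.mem_toList.mpr haR
    have hidxlt : idx a < R.card := by
      rw [hidx, ← hrllen]
      exact List.idxOf_lt_length_iff.mpr harl
    have hplt : idx a * l + c < N := by
      calc idx a * l + c < (idx a + 1) * l := by rw [add_mul]; omega
      _ ≤ R.card * l := Nat.mul_le_mul_right l (by omega)
    refine ⟨hplt, ?_⟩
    have hdiv : (idx a * l + c) / l = idx a := by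
      rw [mul_comm, Nat.mul_add_div (by omega), Nat.div_eq_of_lt hc]
      omega
    have : as.getD (idx a * l + c) a₀ = rl.getD ((idx a * l + c) / l) a₀ := by
      rw [List.getD_eq_getElem?_getD, has, List.getElem?_eq_getElem (by
        rw [List.length_ofFn]; exact hplt)]
      simp
    rw [this, hdiv, List.getD_eq_getElem?_getD,
      List.getElem?_eq_getElem (by rw [hrllen]; exact hidxlt), Option.getD_some]
    exact List.getElem_idxOf (by rw [hrllen]; exact hidxlt)
  have hinj : ∀ (pre pre' : List Y) (a b : A), σ pre = some a → σ pre' = some b → a ≠ b →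
      idx a ≠ idx b := by
    intro pre pre' a b hpre hpre' hab
    have harl : a ∈ rl := by rw [hrl]; exact Finset.mem_toList.mpr ((hR a).mpr ⟨pre, hpre⟩)
    have hbrl : b ∈ rl := by rw [hrl]; exact Finset.mem_toList.mpr ((hR b).mpr ⟨pre', hpre'⟩)
    intro hcontra
    apply hab
    have h1 : rl[idx a]'(List.idxOf_lt_length_iff.mpr harl) = a := List.getElem_idxOf _
    have h2 : rl[idx b]'(List.idxOf_lt_length_iff.mpr hbrl) = b := List.getElem_idxOf _
    rw [← h1, ← h2]
    congr 1
  -- properties of the non-adaptive strategy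
  have hfs' : FiniteStrategy (ofList as : List Y → Option A) := by
    refine ⟨?_, ?_, ?_⟩
    · rw [isSome_ofList, haslen, List.length_nil]
      omega
    · intro l1 l2 hpre h2
      rw [isSome_ofList] at h2 ⊢
      have := hpre.length_le
      omega
    · refine Set.Finite.subset (List.finite_length_lt Y N) ?_
      intro w hw
      rw [Set.mem_setOf_eq, isSome_ofList, haslen] at hw
      exact hw
  have hhl' : HasLength (ofList as : List Y → Option A) N := by
    constructor
    · intro ys hys
      rw [isSome_ofList, haslen] at hys
      omega
    · refine ⟨List.replicate (N - 1) d, ?_, by simp; omega⟩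
      rw [isSome_ofList, haslen]
      simp
      omega
  refine ⟨as, by rw [haslen, hRcard], hfs', by rw [hRcard]; exact hhl', ?_⟩
  -- it remains to compare the leakages
  have Mnn : ∀ (a : A) (x : X) (y : Y), 0 ≤ M a x y := fun a x y => (hM a x).1 y
  have hσl : ∀ ys : List Y, (σ ys).isSome → ys.length + 1 ≤ l := hl.1
  set sim : List Y → List Y := fun w => simF σ idx l w d N [] with hsim
  set W : Finset (List Y) := Finset.image (fun f : Fin N → Y => List.ofFn f) Finset.univ
    with hWdef
  have hW : ∀ w : List Y, w ∈ W ↔ w.length = N := by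
    intro w
    rw [hWdef, Finset.mem_image]
    constructor
    · rintro ⟨f, _, rfl⟩
      simp
    · intro hlen
      refine ⟨fun i => w.getD (i : ℕ) d, Finset.mem_univ _, ?_⟩
      refine List.ext_getElem (by simp [hlen]) ?_
      intro i h1 h2
      rw [List.getElem_ofFn]
      exact (List.getD_eq_getElem w d h2).symm ▸ rfl
  set Zfin : Finset (List Y) := (domF ×ˢ (Finset.univ : Finset Y)).image
    (fun q => q.1 ++ [q.2]) with hZdef
  have hZmem : ∀ z : List Y, z ≠ [] → (σ z.dropLast).isSome → z ∈ Zfin := by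
    intro z hz1 hz2
    rw [hZdef, Finset.mem_image]
    refine ⟨(z.dropLast, z.getLast hz1), ?_, List.dropLast_concat_getLast hz1⟩
    rw [Finset.mem_product]
    exact ⟨by rw [hdomF, Set.Finite.mem_toFinset]; exact hz2, Finset.mem_univ _⟩
  have hcd0 : ∀ (z : List Y) (x : X),
      ¬(z ≠ [] ∧ (σ z.dropLast).isSome ∧ σ z = none) → condDist M σ x z = 0 := by
    intro z x h
    rw [condDist, if_neg h]
  have hobs0 : ∀ z ∉ Zfin, obsProb M σ p z = 0 := by
    intro z hz
    rw [obsProb]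
    refine Finset.sum_eq_zero fun x _ => ?_
    rw [joint, hcd0 z x, mul_zero]
    rintro ⟨h1, h2, _⟩
    exact hz (hZmem z h1 h2)
  have hsimmax : ∀ w : List Y,
      sim w ≠ [] ∧ (σ (sim w).dropLast).isSome ∧ σ (sim w) = none := by
    intro w
    obtain ⟨B1, B2, B3, _⟩ := simF_spec (w := w) (d := d) (idx := idx) hσl N ([] : List Y)
      (by simp) (by simpa using hlN)
    have hne : sim w ≠ [] := by
      intro h
      have h' : simF σ idx l w d N [] = [] := h
      rw [h', ha₀] at B2
      exact absurd B2 (by simp)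
    refine ⟨hne, ?_, B2⟩
    have hlen : 0 < (sim w).length := List.length_pos_iff.mpr hne
    have h5 := B3 ((sim w).length - 1)
      (by show (sim w).length - 1 < (sim w).length; omega)
    rw [List.dropLast_eq_take]
    exact h5
  -- conditional uncertainties as finite sums
  have hCU' : condUncert U M (ofList as) p
      = ∑ w ∈ W, obsProb M (ofList as) p w * U (post M (ofList as) p w) := by
    refine tsum_eq_sum fun w hw => ?_
    have hlen : w.length ≠ N := fun h => hw ((hW w).mpr h)
    have : obsProb M (ofList as) p w = 0 := by
      rw [obsProb]
      refine Finset.sum_eq_zero fun x _ => ?_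
      rw [joint, condDist_ofList M as a₀ d x (by omega), if_neg (by rw [haslen]; exact hlen),
        mul_zero]
    rw [this, zero_mul]
  have hCU : condUncert U M σ p = ∑ z ∈ Zfin, obsProb M σ p z * U (post M σ p z) := by
    refine tsum_eq_sum fun z hz => ?_
    rw [hobs0 z hz, zero_mul]
  -- pushforward of the conditional distribution
  have hpf : ∀ z : List Y, z ≠ [] → (σ z.dropLast).isSome → σ z = none → ∀ x : X,
      ∑ w ∈ W.filter (fun w => sim w = z), condDist M (ofList as) x w = condDist M σ x z := by
    intro z hz1 hz2 hz3 x
    have hfilter : W.filter (fun w => sim w = z)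
        = Finset.image (fun f : Fin N → Y => List.ofFn f)
            (Finset.univ.filter (fun f : Fin N → Y => sim (List.ofFn f) = z)) := by
      rw [hWdef, Finset.filter_image]
    rw [hfilter, Finset.sum_image (fun f _ g _ h => List.ofFn_injective h), Finset.sum_filter]
    have hterm : ∀ f : Fin N → Y, condDist M (ofList as) x (List.ofFn f)
        = ∏ j : Fin N, M (as.getD (j : ℕ) a₀) x (f j) := by
      intro f
      rw [condDist_ofList M as a₀ d x (by omega), if_pos (by simp [haslen]), haslen,
        ← Fin.prod_univ_eq_prod_range (fun i => M (as.getD i a₀) x ((List.ofFn f).getD i d)) N]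
      exact Finset.prod_congr rfl fun j _ => by rw [ofFn_getD f _ j.2 d]
    simp only [hterm]
    exact pushforward M hM σ hpc idx l N hl1 hlN d a₀ hσl as haslen hpos hinj hz1 hz2 hz3 x
  have hjointpf : ∀ z : List Y, z ≠ [] → (σ z.dropLast).isSome → σ z = none → ∀ x : X,
      ∑ w ∈ W.filter (fun w => sim w = z), joint M (ofList as) p x w = joint M σ p x z := by
    intro z h1 h2 h3 x
    simp only [joint, ← Finset.mul_sum]
    rw [hpf z h1 h2 h3 x]
  have hobspf : ∀ z : List Y, z ≠ [] → (σ z.dropLast).isSome → σ z = none →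
      ∑ w ∈ W.filter (fun w => sim w = z), obsProb M (ofList as) p w = obsProb M σ p z := by
    intro z h1 h2 h3
    simp only [obsProb]
    rw [Finset.sum_comm]
    exact Finset.sum_congr rfl fun x _ => hjointpf z h1 h2 h3 x
  have hjoint'nn : ∀ (x : X) (w : List Y), 0 ≤ joint M (ofList as) p x w :=
    fun x w => mul_nonneg (hp.1 x) (condDist_nonneg Mnn _ x w)
  have hobs'nn : ∀ w : List Y, 0 ≤ obsProb M (ofList as) p w :=
    fun w => Finset.sum_nonneg fun x _ => hjoint'nn x w
  have hobsnn : ∀ z : List Y, 0 ≤ obsProb M σ p z :=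
    fun z => Finset.sum_nonneg fun x _ => mul_nonneg (hp.1 x) (condDist_nonneg Mnn σ x z)
  have hstep : ∀ z ∈ Zfin,
      ∑ w ∈ W.filter (fun w => sim w = z),
          obsProb M (ofList as) p w * U (post M (ofList as) p w)
        ≤ obsProb M σ p z * U (post M σ p z) := by
    intro z _
    by_cases hmax : z ≠ [] ∧ (σ z.dropLast).isSome ∧ σ z = none
    · obtain ⟨h1, h2, h3⟩ := hmax
      by_cases hzero : obsProb M σ p z = 0
      · have hsum0 : ∑ w ∈ W.filter (fun w => sim w = z), obsProb M (ofList as) p w = 0 := by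
          rw [hobspf z h1 h2 h3, hzero]
        have hall : ∀ w ∈ W.filter (fun w => sim w = z), obsProb M (ofList as) p w = 0 :=
          (Finset.sum_eq_zero_iff_of_nonneg (fun w _ => hobs'nn w)).mp hsum0
        rw [hzero, zero_mul]
        refine le_of_eq (Finset.sum_eq_zero fun w hw => ?_)
        rw [hall w hw, zero_mul]
      · have hobszpos : 0 < obsProb M σ p z := lt_of_le_of_ne (hobsnn z) (Ne.symm hzero)
        set Wz := W.filter (fun w => sim w = z) with hWz
        set t := Wz.filter (fun w => obsProb M (ofList as) p w ≠ 0) with htdef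
        have hLHS : ∑ w ∈ t, obsProb M (ofList as) p w * U (post M (ofList as) p w)
            = ∑ w ∈ Wz, obsProb M (ofList as) p w * U (post M (ofList as) p w) := by
          rw [htdef]
          refine Finset.sum_filter_of_ne fun w _ hne => ?_
          intro h0
          rw [h0, zero_mul] at hne
          exact hne rfl
        have htobs : ∑ w ∈ t, obsProb M (ofList as) p w = obsProb M σ p z := by
          rw [htdef]
          rw [Finset.sum_filter_of_ne fun w _ hne => hne]
          exact hobspf z h1 h2 h3
        have htjoint : ∀ x : X, ∑ w ∈ t, joint M (ofList as) p x w = joint M σ p x z := by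
          intro x
          rw [htdef]
          have hsub : ∑ w ∈ Wz.filter (fun w => obsProb M (ofList as) p w ≠ 0),
              joint M (ofList as) p x w = ∑ w ∈ Wz, joint M (ofList as) p x w := by
            refine Finset.sum_filter_of_ne fun w _ hne => ?_
            intro h0
            apply hne
            exact (Finset.sum_eq_zero_iff_of_nonneg (fun x' _ => hjoint'nn x' w)).mp h0 x
              (Finset.mem_univ x)
          rw [hsub]
          exact hjointpf z h1 h2 h3 x
        have hmem : ∀ w ∈ t, post M (ofList as) p w ∈ stdSimplex ℝ X := by
          intro w hw
          have hne : obsProb M (ofList as) p w ≠ 0 := (Finset.mem_filter.mp hw).2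
          constructor
          · intro x
            exact div_nonneg (hjoint'nn x w) (hobs'nn w)
          · rw [show (∑ x : X, post M (ofList as) p w x)
                = (∑ x : X, joint M (ofList as) p x w) / obsProb M (ofList as) p w from
              by rw [Finset.sum_div]; rfl]
            rw [show (∑ x : X, joint M (ofList as) p x w) = obsProb M (ofList as) p w from rfl]
            exact div_self hne
        have hw0 : ∀ w ∈ t, 0 ≤ obsProb M (ofList as) p w / obsProb M σ p z :=
          fun w _ => div_nonneg (hobs'nn w) (le_of_lt hobszpos)
        have hw1 : ∑ w ∈ t, obsProb M (ofList as) p w / obsProb M σ p z = 1 := by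
          rw [← Finset.sum_div, htobs, div_self hzero]
        have hjensen := hU.1.le_map_sum hw0 hw1 hmem
        have hcomb : (∑ w ∈ t, (obsProb M (ofList as) p w / obsProb M σ p z)
            • post M (ofList as) p w) = post M σ p z := by
          funext x
          rw [Finset.sum_apply]
          have hterm : ∀ w ∈ t, ((obsProb M (ofList as) p w / obsProb M σ p z)
              • post M (ofList as) p w) x = joint M (ofList as) p x w / obsProb M σ p z := by
            intro w hw
            have hne : obsProb M (ofList as) p w ≠ 0 := (Finset.mem_filter.mp hw).2
            rw [Pi.smul_apply, smul_eq_mul, post]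
            field_simp
            try ring
          rw [Finset.sum_congr rfl hterm, ← Finset.sum_div, htjoint x, post]
        rw [hcomb] at hjensen
        rw [← hLHS]
        have hrwsum : ∑ w ∈ t, obsProb M (ofList as) p w * U (post M (ofList as) p w)
            = obsProb M σ p z * ∑ w ∈ t, (obsProb M (ofList as) p w / obsProb M σ p z)
              • U (post M (ofList as) p w) := by
          rw [Finset.mul_sum]
          refine Finset.sum_congr rfl fun w _ => ?_
          rw [smul_eq_mul]
          field_simp
          try ring
        rw [hrwsum]
        exact mul_le_mul_of_nonneg_left hjensen (le_of_lt hobszpos)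
    · have hempty : W.filter (fun w => sim w = z) = ∅ := by
        rw [Finset.filter_eq_empty_iff]
        intro w _
        intro hsimw
        obtain ⟨m1, m2, m3⟩ := hsimmax w
        rw [hsimw] at m1 m2 m3
        exact hmax ⟨m1, m2, m3⟩
      rw [hempty, Finset.sum_empty]
      have hz0 : obsProb M σ p z = 0 := by
        rw [obsProb]
        exact Finset.sum_eq_zero fun x _ => by rw [joint, hcd0 z x hmax, mul_zero]
      rw [hz0, zero_mul]
  have hfinal : condUncert U M (ofList as) p ≤ condUncert U M σ p := by
    calc condUncert U M (ofList as) p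
        = ∑ w ∈ W, obsProb M (ofList as) p w * U (post M (ofList as) p w) := hCU'
      _ = ∑ z ∈ Zfin, ∑ w ∈ W.filter (fun w => sim w = z),
            obsProb M (ofList as) p w * U (post M (ofList as) p w) :=
          (Finset.sum_fiberwise_of_maps_to
            (fun w _ => hZmem (sim w) (hsimmax w).1 (hsimmax w).2.1) _).symm
      _ ≤ ∑ z ∈ Zfin, obsProb M σ p z * U (post M σ p z) := Finset.sum_le_sum hstep
      _ = condUncert U M σ p := hCU.symm
  rw [leak, leak]
  linarith

end
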